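/- (Theorem T_map, part (b).) Suppose the tuple {(n0,n1,n2), B, B_I} is admissible. Then for every x̂ ∈ L2^{n_x}, the function 𝒯x̂ belongs to X (i.e., its three components have the required Sobolev regularity and satisfy the boundary condition defining X), and D(𝒯x̂) = x̂. -/

import Mathlib

open MeasureTheory Matrix Topology Filter

noncomputable section

namespace PIEpaper

/-- The Lebesgue measure restricted to the interval `[a,b]`. -/
def μab (a b : ℝ) : Measure ℝ := volume.restrict (Set.Icc a b)

/-- A matrix-valued function on `[a,b]` is essentially bounded (belongs to `L∞`). -/
def EssBddMat {ι κ : Type*} (a b : ℝ) (M : ℝ → Matrix ι κ ℝ) : Prop :=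
  Measurable (fun s i j => M s i j) ∧ ∃ C : ℝ, ∀ᵐ s ∂(μab a b), ∀ i j, |M s i j| ≤ C

/-- A matrix-valued function on `[a,b]` is (entrywise) square integrable. -/
def SqIntMat {ι κ : Type*} (a b : ℝ) (M : ℝ → Matrix ι κ ℝ) : Prop :=
  Measurable (fun s i j => M s i j) ∧ ∀ i j, MemLp (fun s => M s i j) 2 (μab a b)

/-- A matrix-valued kernel `R : [a,b]² → ℝ^{ι×κ}` is separable if `R(s,θ) = F(s)ᵀ G(θ)`
for essentially bounded `F, G`. -/
def SepMat {ι κ : Type*} (a b : ℝ) (R : ℝ → ℝ → Matrix ι κ ℝ) : Prop :=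
  ∃ (r : ℕ) (F : ℝ → Matrix (Fin r) ι ℝ) (G : ℝ → Matrix (Fin r) κ ℝ),
    EssBddMat a b F ∧ EssBddMat a b G ∧
    ∀ s ∈ Set.Icc a b, ∀ θ ∈ Set.Icc a b, R s θ = (F s)ᵀ * G θ

variable (a b : ℝ) (n0 n1 n2 : ℕ)

/-- Index type for the PDE state blocks `(x0, x1, x2)`, and likewise for the
fundamental state `Dx = (x0, ∂ₛx1, ∂ₛ²x2)`; it has `n_x = n0+n1+n2` elements. -/
abbrev Ix := Fin n0 ⊕ (Fin n1 ⊕ Fin n2)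

/-- Index type for the boundary core `x_c = (x1, x2, ∂ₛx2)`; it has `n_S = n1+2n2` elements. -/
abbrev Ic := Fin n1 ⊕ (Fin n2 ⊕ Fin n2)

/-- Index type for the first two block rows `(n1- and n2-sized)`. -/
abbrev I12 := Fin n1 ⊕ Fin n2

/-- Index type for the full derivative vector
`x_D = (x0, x1, x2, ∂ₛx1, ∂ₛx2, ∂ₛ²x2)` (with `n_x + n_S` elements), organized into the
fundamental-state block `(x0, ∂ₛx1, ∂ₛ²x2)` (left) and the core block `(x1, x2, ∂ₛx2)` (right). -/
abbrev ID := Ix n0 n1 n2 ⊕ Ic n1 n2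

/-- An element of `W^n = W_0^{n0} × W_1^{n1} × W_2^{n2}` on `[a,b]`, encoded through its
components together with their (weak) derivatives: `x1 ∈ W_1` and `x2 ∈ W_2` are identified
with their absolutely continuous representatives, i.e. they satisfy the fundamental theorem
of calculus with square-integrable derivatives `dx1 = ∂ₛx1`, `dx2 = ∂ₛx2`, `ddx2 = ∂ₛ²x2`. -/
structure State where
  x0 : ℝ → Fin n0 → ℝ
  x1 : ℝ → Fin n1 → ℝ
  dx1 : ℝ → Fin n1 → ℝ
  x2 : ℝ → Fin n2 → ℝ
  dx2 : ℝ → Fin n2 → ℝ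
  ddx2 : ℝ → Fin n2 → ℝ
  memLp_x0 : MemLp x0 2 (μab a b)
  memLp_dx1 : MemLp dx1 2 (μab a b)
  memLp_dx2 : MemLp dx2 2 (μab a b)
  memLp_ddx2 : MemLp ddx2 2 (μab a b)
  ftc_x1 : ∀ s ∈ Set.Icc a b, ∀ i, x1 s i = x1 a i + ∫ θ in a..s, dx1 θ i
  ftc_x2 : ∀ s ∈ Set.Icc a b, ∀ i, x2 s i = x2 a i + ∫ θ in a..s, dx2 θ i
  ftc_dx2 : ∀ s ∈ Set.Icc a b, ∀ i, dx2 s i = dx2 a i + ∫ θ in a..s, ddx2 θ i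

variable {a b n0 n1 n2}

/-- The PDE state `x = (x0, x1, x2)` as an `ℝ^{n_x}`-valued function. -/
def xfun (x : State a b n0 n1 n2) (s : ℝ) : Ix n0 n1 n2 → ℝ :=
  Sum.elim (x.x0 s) (Sum.elim (x.x1 s) (x.x2 s))

/-- The fundamental state `Dx = (x0, ∂ₛx1, ∂ₛ²x2)` as an `ℝ^{n_x}`-valued function. -/
def Dx (x : State a b n0 n1 n2) (s : ℝ) : Ix n0 n1 n2 → ℝ :=
  Sum.elim (x.x0 s) (Sum.elim (x.dx1 s) (x.ddx2 s))

/-- The boundary core `x_c = (x1, x2, ∂ₛx2)` as an `ℝ^{n_S}`-valued function. -/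
def xc (x : State a b n0 n1 n2) (s : ℝ) : Ic n1 n2 → ℝ :=
  Sum.elim (x.x1 s) (Sum.elim (x.x2 s) (x.dx2 s))

/-- The full derivative vector `x_D = (x0, x1, x2, ∂ₛx1, ∂ₛx2, ∂ₛ²x2)`. -/
def xD (x : State a b n0 n1 n2) (s : ℝ) : ID n0 n1 n2 → ℝ :=
  Sum.elim (Dx x s) (xc x s)

/-- The boundary-value vector `x_b = (x_c(a), x_c(b)) ∈ ℝ^{2 n_S}`. -/
def xb (x : State a b n0 n1 n2) : (Ic n1 n2 ⊕ Ic n1 n2) → ℝ :=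
  Sum.elim (xc x a) (xc x b)

variable (a b n0 n1 n2)

/-- `T(η) = [[I,0,0],[0,I,ηI],[0,0,I]] ∈ ℝ^{n_S × n_S}`. -/
def Tmat (η : ℝ) : Matrix (Ic n1 n2) (Ic n1 n2) ℝ :=
  Matrix.of fun i j =>
    match i, j with
    | .inl i, .inl j => if i = j then (1:ℝ) else 0
    | .inr (.inl i), .inr (.inl j) => if i = j then (1:ℝ) else 0
    | .inr (.inl i), .inr (.inr j) => if i = j then η else 0
    | .inr (.inr i), .inr (.inr j) => if i = j then (1:ℝ) else 0
    | _, _ => 0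

/-- `Q(η) = [[0,I_{n1},0],[0,0,ηI_{n2}],[0,0,I_{n2}]] ∈ ℝ^{n_S × n_x}`. -/
def Qmat (η : ℝ) : Matrix (Ic n1 n2) (Ix n0 n1 n2) ℝ :=
  Matrix.of fun i j =>
    match i, j with
    | .inl i, .inr (.inl j) => if i = j then (1:ℝ) else 0
    | .inr (.inl i), .inr (.inr j) => if i = j then η else 0
    | .inr (.inr i), .inr (.inr j) => if i = j then (1:ℝ) else 0
    | _, _ => 0

/-- Embedding of the first two block rows into the `x_c` index. -/
def emb12 : I12 n1 n2 → Ic n1 n2 := Sum.elim Sum.inl (fun k => Sum.inr (Sum.inl k))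

/-- `T1(η)`: the first two block rows of `T(η)`. -/
def T1mat (η : ℝ) : Matrix (I12 n1 n2) (Ic n1 n2) ℝ :=
  Matrix.of fun i j => Tmat n1 n2 η (emb12 n1 n2 i) j

/-- `Q1(η)`: the first two block rows of `Q(η)`. -/
def Q1mat (η : ℝ) : Matrix (I12 n1 n2) (Ix n0 n1 n2) ℝ :=
  Matrix.of fun i j => Qmat n0 n1 n2 η (emb12 n1 n2 i) j

/-- `U1 ∈ ℝ^{(n_x+n_S) × n_x}`: the 0-1 matrix placing `(v0,v1,v2)` into the
`x0`, `∂ₛx1` and `∂ₛ²x2` blocks of the `x_D` ordering. -/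
def U1 : Matrix (ID n0 n1 n2) (Ix n0 n1 n2) ℝ :=
  Matrix.of fun i j =>
    match i with
    | .inl i' => if i' = j then (1:ℝ) else 0
    | .inr _ => 0

/-- `U2 ∈ ℝ^{(n_x+n_S) × n_S}`: the 0-1 matrix placing `(w1,w2,w3)` into the
`x1`, `x2` and `∂ₛx2` blocks of the `x_D` ordering. -/
def U2 : Matrix (ID n0 n1 n2) (Ic n1 n2) ℝ :=
  Matrix.of fun i j =>
    match i with
    | .inl _ => (0:ℝ)
    | .inr i' => if i' = j then 1 else 0

/-- The stacked matrix `[T(0); T(b-a)] ∈ ℝ^{2n_S × n_S}`. -/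
def Tstack : Matrix (Ic n1 n2 ⊕ Ic n1 n2) (Ic n1 n2) ℝ :=
  Matrix.of fun i j =>
    match i with
    | .inl i' => Tmat n1 n2 0 i' j
    | .inr i' => Tmat n1 n2 (b - a) i' j

/-- The stacked matrix `[0_{n_S×n_x}; Q(η)] ∈ ℝ^{2n_S × n_x}`. -/
def Qstack (η : ℝ) : Matrix (Ic n1 n2 ⊕ Ic n1 n2) (Ix n0 n1 n2) ℝ :=
  Matrix.of fun i j =>
    match i with
    | .inl _ => (0:ℝ)
    | .inr i' => Qmat n0 n1 n2 η i' j

variable (B : Matrix (Ic n1 n2) (Ic n1 n2 ⊕ Ic n1 n2) ℝ)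
variable (B_I : ℝ → Matrix (Ic n1 n2) (ID n0 n1 n2) ℝ)

/-- `B_T = B [T(0); T(b−a)] − ∫_a^b B_I(s) U2 T(s−a) ds`. -/
def BT : Matrix (Ic n1 n2) (Ic n1 n2) ℝ :=
  B * Tstack a b n1 n2 -
    Matrix.of fun i j => ∫ s in a..b, (B_I s * U2 n0 n1 n2 * Tmat n1 n2 (s - a)) i j

/-- Admissibility of the boundary conditions: `B_T` is invertible. -/
def Admissible : Prop := IsUnit (BT a b n0 n1 n2 B B_I).det

/-- `B_Q(s) = B_T⁻¹ ( B_I(s) U1 − B [0; Q(b−s)] + ∫_s^b B_I(θ) U2 Q(θ−s) dθ )`. -/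
def BQ (s : ℝ) : Matrix (Ic n1 n2) (Ix n0 n1 n2) ℝ :=
  (BT a b n0 n1 n2 B B_I)⁻¹ *
    (B_I s * U1 n0 n1 n2 - B * Qstack n0 n1 n2 (b - s) +
      Matrix.of fun i j => ∫ θ in s..b, (B_I θ * U2 n0 n1 n2 * Qmat n0 n1 n2 (θ - s)) i j)

/-- The boundary condition `B x_b = ∫_a^b B_I(s) x_D(s) ds` defining the set `X`;
  together with the regularity encoded in `State` this says `x ∈ X`. -/
def BCholds (x : State a b n0 n1 n2) : Prop :=
  ∀ i, B.mulVec (xb x) i = ∫ s in a..b, (B_I s).mulVec (xD x s) i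

/-- `G0 = diag(I_{n0}, 0_{n1+n2})`. -/
def G0 : Matrix (Ix n0 n1 n2) (Ix n0 n1 n2) ℝ :=
  Matrix.of fun i j =>
    match i, j with
    | .inl i', .inl j' => if i' = j' then (1:ℝ) else 0
    | _, _ => 0

/-- `G2(s,θ) = [0_{n0×n_x}; T1(s−a) B_Q(θ)]`. -/
def G2 (s θ : ℝ) : Matrix (Ix n0 n1 n2) (Ix n0 n1 n2) ℝ :=
  Matrix.of fun i j =>
    match i with
    | .inl _ => (0:ℝ)
    | .inr i' => (T1mat n1 n2 (s - a) * BQ a b n0 n1 n2 B B_I θ) i' j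

/-- `G1(s,θ) = [0_{n0×n_x}; Q1(s−θ)] + G2(s,θ)`. -/
def G1 (s θ : ℝ) : Matrix (Ix n0 n1 n2) (Ix n0 n1 n2) ℝ :=
  (Matrix.of fun i j =>
    match i with
    | .inl _ => (0:ℝ)
    | .inr i' => Q1mat n0 n1 n2 (s - θ) i' j) + G2 a b n0 n1 n2 B B_I s θ

/-- The PI operator `𝒯`, acting on (representatives of) functions in `L2^{n_x}`:
`(𝒯v)(s) = G0 v(s) + ∫_a^s G1(s,θ) v(θ) dθ + ∫_s^b G2(s,θ) v(θ) dθ`. -/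
def Tfun (v : ℝ → Ix n0 n1 n2 → ℝ) (s : ℝ) : Ix n0 n1 n2 → ℝ := fun i =>
  (G0 n0 n1 n2).mulVec (v s) i
  + (∫ θ in a..s, (G1 a b n0 n1 n2 B B_I s θ).mulVec (v θ) i)
  + (∫ θ in s..b, (G2 a b n0 n1 n2 B B_I s θ).mulVec (v θ) i)

/-- `R_{D,2}(s,θ) = U2 T(s−a) B_Q(θ)`. -/
def RD2 (s θ : ℝ) : Matrix (ID n0 n1 n2) (Ix n0 n1 n2) ℝ :=
  U2 n0 n1 n2 * Tmat n1 n2 (s - a) * BQ a b n0 n1 n2 B B_I θ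

/-- `R_{D,1}(s,θ) = R_{D,2}(s,θ) + U2 Q(s−θ)`. -/
def RD1 (s θ : ℝ) : Matrix (ID n0 n1 n2) (Ix n0 n1 n2) ℝ :=
  RD2 a b n0 n1 n2 B B_I s θ + U2 n0 n1 n2 * Qmat n0 n1 n2 (s - θ)

end PIEpaper

namespace PIEpaper
variable (a b : ℝ) (n0 n1 n2 : ℕ)
variable (B : Matrix (Ic n1 n2) (Ic n1 n2 ⊕ Ic n1 n2) ℝ)
variable (B_I : ℝ → Matrix (Ic n1 n2) (ID n0 n1 n2) ℝ)

/-- The `L2[a,b]` norm of an `ℝ^ι`-valued function. -/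
def L2norm {ι : Type*} [Fintype ι] (f : ℝ → ι → ℝ) : ℝ :=
  Real.sqrt (∫ s in a..b, ∑ i, (f s i) ^ 2)

/-- The `L2[a,b]` inner product of two `ℝ^ι`-valued functions. -/
def L2inner {ι : Type*} [Fintype ι] (f g : ℝ → ι → ℝ) : ℝ :=
  ∫ s in a..b, ∑ i, f s i * g s i

variable (A0 : ℝ → Matrix (Ix n0 n1 n2) (ID n0 n1 n2) ℝ)
variable (A1 A2 : ℝ → ℝ → Matrix (Ix n0 n1 n2) (ID n0 n1 n2) ℝ)

/-- `Â0(s) = A0(s) U1`. -/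
def Ahat0 (s : ℝ) : Matrix (Ix n0 n1 n2) (Ix n0 n1 n2) ℝ := A0 s * U1 n0 n1 n2

/-- `Â1(s,θ)`. -/
def Ahat1 (s θ : ℝ) : Matrix (Ix n0 n1 n2) (Ix n0 n1 n2) ℝ :=
  A0 s * RD1 a b n0 n1 n2 B B_I s θ + A1 s θ * U1 n0 n1 n2
  + (Matrix.of fun i j => ∫ β in a..θ, (A1 s β * RD2 a b n0 n1 n2 B B_I β θ) i j)
  + (Matrix.of fun i j => ∫ β in θ..s, (A1 s β * RD1 a b n0 n1 n2 B B_I β θ) i j)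
  + (Matrix.of fun i j => ∫ β in s..b, (A2 s β * RD1 a b n0 n1 n2 B B_I β θ) i j)

/-- `Â2(s,θ)`. -/
def Ahat2 (s θ : ℝ) : Matrix (Ix n0 n1 n2) (Ix n0 n1 n2) ℝ :=
  A0 s * RD2 a b n0 n1 n2 B B_I s θ + A2 s θ * U1 n0 n1 n2
  + (Matrix.of fun i j => ∫ β in a..s, (A1 s β * RD2 a b n0 n1 n2 B B_I β θ) i j)
  + (Matrix.of fun i j => ∫ β in s..θ, (A2 s β * RD2 a b n0 n1 n2 B B_I β θ) i j)
  + (Matrix.of fun i j => ∫ β in θ..b, (A2 s β * RD1 a b n0 n1 n2 B B_I β θ) i j)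

/-- The PI operator `𝒜`:
`(𝒜v)(s) = Â0(s) v(s) + ∫_a^s Â1(s,θ) v(θ) dθ + ∫_s^b Â2(s,θ) v(θ) dθ`. -/
def Afun (v : ℝ → Ix n0 n1 n2 → ℝ) (s : ℝ) : Ix n0 n1 n2 → ℝ := fun i =>
  (Ahat0 n0 n1 n2 A0 s).mulVec (v s) i
  + (∫ θ in a..s, (Ahat1 a b n0 n1 n2 B B_I A0 A1 A2 s θ).mulVec (v θ) i)
  + (∫ θ in s..b, (Ahat2 a b n0 n1 n2 B B_I A0 A1 A2 s θ).mulVec (v θ) i)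

/-- The right-hand side of the PDE dynamics:
`A0(s) x_D(s) + ∫_a^s A1(s,θ) x_D(θ) dθ + ∫_s^b A2(s,θ) x_D(θ) dθ`. -/
def PDErhs (x : State a b n0 n1 n2) (s : ℝ) : Ix n0 n1 n2 → ℝ := fun i =>
  (A0 s).mulVec (xD x s) i
  + (∫ θ in a..s, (A1 s θ).mulVec (xD x θ) i)
  + (∫ θ in s..b, (A2 s θ).mulVec (xD x θ) i)

/-- `t ↦ u(t)` is Fréchet differentiable at `t` with respect to the `L2[a,b]` norm,
with derivative `g`. -/
def HasL2DerivAt (u : ℝ → ℝ → Ix n0 n1 n2 → ℝ) (g : ℝ → Ix n0 n1 n2 → ℝ) (t : ℝ) : Prop :=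
  Tendsto (fun h : ℝ =>
      L2norm a b (fun s i => (u (t + h) s i - u t s i) / h - g s i))
    (nhdsWithin 0 {0}ᶜ) (nhds 0)

/-- `t ↦ u(t)` is Fréchet differentiable at `t` with respect to the `𝒯`-norm
`v ↦ ‖𝒯v‖_{L2}`, with derivative `g`. -/
def HasTDerivAt (u : ℝ → ℝ → Ix n0 n1 n2 → ℝ) (g : ℝ → Ix n0 n1 n2 → ℝ) (t : ℝ) : Prop :=
  Tendsto (fun h : ℝ =>
      L2norm a b (Tfun a b n0 n1 n2 B B_I
        (fun s i => (u (t + h) s i - u t s i) / h - g s i)))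
    (nhdsWithin 0 {0}ᶜ) (nhds 0)

/-- `x : [0,∞) → W^n` satisfies the PDE defined by `{(n0,n1,n2), B, B_I, A0, A1, A2}` with
initial condition `x⁰ ∈ X`: `x(t) ∈ X` for all `t ≥ 0`, `x(0) = x⁰`, and for almost every
`t ≥ 0`, `x` is Fréchet differentiable (w.r.t. the `L2` norm) at `t` with derivative `ẋ(t)`
satisfying the dynamics for almost every `s ∈ [a,b]`. -/
def SatisfiesPDE (x : ℝ → State a b n0 n1 n2) (x0 : State a b n0 n1 n2) : Prop :=
  (∀ t, 0 ≤ t → BCholds a b n0 n1 n2 B B_I (x t)) ∧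
  (∀ᵐ s ∂(μab a b), ∀ i, xfun (x 0) s i = xfun x0 s i) ∧
  (∀ᵐ t ∂(volume.restrict (Set.Ici (0:ℝ))), ∃ g : ℝ → Ix n0 n1 n2 → ℝ,
    HasL2DerivAt a b n0 n1 n2 (fun τ => xfun (x τ)) g t ∧
    ∀ᵐ s ∂(μab a b), ∀ i, g s i = PDErhs a b n0 n1 n2 A0 A1 A2 (x t) s i)

/-- `x_f : [0,∞) → L2^{n_x}` satisfies the PIE defined by `{𝒯, 𝒜}` with initial condition
`x_f⁰ ∈ L2^{n_x}`: `x_f(t) ∈ L2` for all `t ≥ 0`, `x_f(0) = x_f⁰`, and for almost every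
`t ≥ 0`, `x_f` is Fréchet differentiable w.r.t. the `𝒯`-norm at `t` with derivative
`ẋ_f(t)` satisfying `𝒯 ẋ_f(t) = 𝒜 x_f(t)` for almost every `s ∈ [a,b]`. -/
def SatisfiesPIE (xf : ℝ → ℝ → Ix n0 n1 n2 → ℝ) (xf0 : ℝ → Ix n0 n1 n2 → ℝ) : Prop :=
  (∀ t, 0 ≤ t → MemLp (xf t) 2 (μab a b)) ∧
  (∀ᵐ s ∂(μab a b), ∀ i, xf 0 s i = xf0 s i) ∧
  (∀ᵐ t ∂(volume.restrict (Set.Ici (0:ℝ))), ∃ g : ℝ → Ix n0 n1 n2 → ℝ,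
    HasTDerivAt a b n0 n1 n2 B B_I xf g t ∧
    ∀ᵐ s ∂(μab a b), ∀ i,
      Tfun a b n0 n1 n2 B B_I g s i = Afun a b n0 n1 n2 B B_I A0 A1 A2 (xf t) s i)

/-- The `X`-norm `‖x‖_X = (Σ_{i=0}^2 ‖∂ₛ^i x_i‖²_{L2})^{1/2}`. -/
def normX (x : State a b n0 n1 n2) : ℝ :=
  Real.sqrt ((L2norm a b x.x0) ^ 2 + (L2norm a b x.dx1) ^ 2 + (L2norm a b x.ddx2) ^ 2)

/-- The Sobolev-type norm `‖x‖_H = Σ_{i=0}^2 Σ_{j=0}^i ‖∂ₛ^j x_i‖_{L2}`. -/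
def normH (x : State a b n0 n1 n2) : ℝ :=
  L2norm a b x.x0 + (L2norm a b x.x1 + L2norm a b x.dx1)
    + (L2norm a b x.x2 + L2norm a b x.dx2 + L2norm a b x.ddx2)

/-- The PDE defined by `{(n0,n1,n2), B, B_I, A0, A1, A2}` is exponentially stable. -/
def ExpStablePDE : Prop :=
  ∃ M > (0:ℝ), ∃ α > (0:ℝ), ∀ x0 : State a b n0 n1 n2, BCholds a b n0 n1 n2 B B_I x0 →
    ∀ x : ℝ → State a b n0 n1 n2, SatisfiesPDE a b n0 n1 n2 B B_I A0 A1 A2 x x0 →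
      ∀ t, 0 ≤ t → normH a b n0 n1 n2 (x t) ≤ M * normH a b n0 n1 n2 x0 * Real.exp (-α * t)

/-- The PIE defined by `{𝒯, 𝒜}` is exponentially stable. -/
def ExpStablePIE : Prop :=
  ∃ M > (0:ℝ), ∃ α > (0:ℝ), ∀ xf0 : ℝ → Ix n0 n1 n2 → ℝ, MemLp xf0 2 (μab a b) →
    ∀ xf : ℝ → ℝ → Ix n0 n1 n2 → ℝ,
      SatisfiesPIE a b n0 n1 n2 B B_I A0 A1 A2 xf xf0 →
      ∀ t, 0 ≤ t → L2norm a b (xf t) ≤ M * L2norm a b xf0 * Real.exp (-α * t)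

/-- The `X`-inner product `⟨u,w⟩_X = Σ_{i=0}^2 ⟨∂ₛ^i u_i, ∂ₛ^i w_i⟩_{L2}` of two
`ℝ^{n_x}`-valued functions, where the spatial derivatives of the `W_1`- and `W_2`-blocks
are taken classically (they exist a.e. for elements of `X`). -/
def XinnerF (u w : ℝ → Ix n0 n1 n2 → ℝ) : ℝ :=
  (∫ s in a..b, ∑ i : Fin n0, u s (Sum.inl i) * w s (Sum.inl i))
  + (∫ s in a..b, ∑ i : Fin n1,
      deriv (fun t => u t (Sum.inr (Sum.inl i))) s *
      deriv (fun t => w t (Sum.inr (Sum.inl i))) s)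
  + (∫ s in a..b, ∑ i : Fin n2,
      deriv (deriv (fun t => u t (Sum.inr (Sum.inr i)))) s *
      deriv (deriv (fun t => w t (Sum.inr (Sum.inr i)))) s)

/-- The `X`-distance between two elements of `X`, induced by the `X`-norm:
`‖u − v‖_X = ‖Du − Dv‖_{L2}`. -/
def distX (u v : State a b n0 n1 n2) : ℝ :=
  Real.sqrt (∫ s in a..b, ∑ i, (Dx u s i - Dx v s i) ^ 2)

end PIEpaper

namespace PIEpaper

section AuxGeneric


instance (a b : ℝ) : IsFiniteMeasure (μab a b) := by
  constructor
  rw [μab, Measure.restrict_apply_univ, Real.volume_Icc]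
  exact ENNReal.ofReal_lt_top

lemma integrable_mul_L2 {μ : Measure ℝ} {f g : ℝ → ℝ}
    (hf : MemLp f 2 μ) (hg : MemLp g 2 μ) :
    Integrable (fun x => f x * g x) μ := by
  refine (hf.integrable_sq.add hg.integrable_sq).mono' (hf.1.mul hg.1) ?_
  filter_upwards with x
  have : |f x| * |g x| ≤ f x ^ 2 + g x ^ 2 := by
    nlinarith [sq_nonneg (|f x| - |g x|), abs_nonneg (f x), abs_nonneg (g x), sq_abs (f x),
      sq_abs (g x)]
  simpa [Real.norm_eq_abs, abs_mul] using this

lemma continuous_memLp2 {a b : ℝ} {g : ℝ → ℝ} (hg : Continuous g) : MemLp g 2 (μab a b) := by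
  obtain ⟨C, hC⟩ := (isCompact_Icc : IsCompact (Set.Icc a b)).exists_bound_of_continuousOn hg.continuousOn
  refine MemLp.of_bound hg.aestronglyMeasurable C ?_
  exact (ae_restrict_mem measurableSet_Icc).mono fun x hx => hC x hx

lemma memLp_pi2 {ι : Type*} [Fintype ι] [DecidableEq ι] {μ : Measure ℝ} {g : ℝ → ι → ℝ}
    (h : ∀ i, MemLp (fun s => g s i) 2 μ) : MemLp g 2 μ := by
  have : (fun s => ∑ i, Pi.single i (g s i)) = g := by
    funext s; exact Finset.univ_sum_single (g s)
  rw [← this]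
  refine memLp_finset_sum (f := fun i s => Pi.single i (g s i)) Finset.univ (fun i _ => ?_)
  have hc : Continuous (fun x : ℝ => Pi.single (M := fun _ : ι => ℝ) i x) := by
    refine continuous_pi fun j => ?_
    rcases eq_or_ne j i with rfl | hij
    · simpa [Pi.single_apply] using continuous_id'
    · simp only [Pi.single_apply, if_neg hij]
      exact continuous_const
  refine MemLp.of_le_mul (c := 1) (h i) (hc.comp_aestronglyMeasurable (h i).1) ?_
  filter_upwards with s
  refine (pi_norm_le_iff_of_nonneg (by positivity)).2 fun j => ?_
  rw [Pi.single_apply]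
  rcases eq_or_ne j i with rfl | hij
  · simp
  · rw [if_neg hij]
    simp only [norm_zero]
    positivity

/-- interval integrability from integrability on `μab`. -/
lemma intervalIntegrable_of_memab {a b : ℝ} {g : ℝ → ℝ} (hg : Integrable g (μab a b))
    {c d : ℝ} (h1 : a ≤ c) (h2 : a ≤ d) (h3 : c ≤ b) (h4 : d ≤ b) :
    IntervalIntegrable g volume c d := by
  constructor <;>
  · refine hg.mono_measure (Measure.restrict_mono (fun x hx => ?_) le_rfl)
    exact Set.mem_Icc.2 ⟨by rcases hx with ⟨h,h'⟩; linarith, by rcases hx with ⟨h,h'⟩; linarith⟩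

lemma swap_triangle {a b : ℝ} (hab : a ≤ b) (g : ℝ → ℝ → ℝ)
    (hg : Integrable (fun p : ℝ × ℝ => g p.1 p.2)
      ((volume.restrict (Set.Ioc a b)).prod (volume.restrict (Set.Ioc a b)))) :
    ∫ s in a..b, (∫ θ in a..s, g s θ) = ∫ θ in a..b, ∫ s in θ..b, g s θ := by
  set ρ := volume.restrict (Set.Ioc a b) with hρ
  set T : Set (ℝ × ℝ) := {p : ℝ × ℝ | p.2 ≤ p.1} with hT
  have mT : MeasurableSet T := measurableSet_le measurable_snd measurable_fst
  have hg' : Integrable (T.indicator (fun p : ℝ × ℝ => g p.1 p.2)) (ρ.prod ρ) :=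
    hg.indicator mT
  have key : (∫ s, (∫ θ, T.indicator (fun p : ℝ × ℝ => g p.1 p.2) (s, θ) ∂ρ) ∂ρ)
      = ∫ θ, (∫ s, T.indicator (fun p : ℝ × ℝ => g p.1 p.2) (s, θ) ∂ρ) ∂ρ := by
    apply integral_integral_swap
    exact hg'
  have step_s : ∀ s ∈ Set.Ioc a b,
      (∫ θ in a..s, g s θ) = ∫ θ, T.indicator (fun p : ℝ × ℝ => g p.1 p.2) (s, θ) ∂ρ := by
    intro s hs
    have h1 : (fun θ => T.indicator (fun p : ℝ × ℝ => g p.1 p.2) (s, θ))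
        = (Set.Iic s).indicator (fun θ => g s θ) := by
      funext θ
      by_cases h : θ ≤ s <;>
        simp [Set.indicator_apply, hT, h]
    rw [h1, hρ, setIntegral_indicator measurableSet_Iic, Set.Ioc_inter_Iic,
      min_eq_right hs.2, intervalIntegral.integral_of_le hs.1.le]
  have step_t : ∀ θ ∈ Set.Ioc a b,
      (∫ s, T.indicator (fun p : ℝ × ℝ => g p.1 p.2) (s, θ) ∂ρ) = ∫ s in θ..b, g s θ := by
    intro θ hθ
    have h1 : (fun s => T.indicator (fun p : ℝ × ℝ => g p.1 p.2) (s, θ))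
        = (Set.Ici θ).indicator (fun s => g s θ) := by
      funext s
      by_cases h : θ ≤ s <;>
        simp [Set.indicator_apply, hT, h]
    have h2 : Set.Ioc a b ∩ Set.Ici θ = Set.Ioc θ b ∪ {θ} := by
      ext s
      simp only [Set.mem_inter_iff, Set.mem_Ioc, Set.mem_Ici, Set.mem_union, Set.mem_singleton_iff]
      constructor
      · rintro ⟨⟨_, h2⟩, h3⟩
        rcases eq_or_lt_of_le h3 with h | h
        · right; exact h.symm
        · left; exact ⟨h, h2⟩
      · rintro (⟨h1', h2'⟩ | rfl)
        · exact ⟨⟨hθ.1.trans h1', h2'⟩, h1'.le⟩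
        · exact ⟨⟨hθ.1, hθ.2⟩, le_rfl⟩
    rw [h1, hρ, setIntegral_indicator measurableSet_Ici, h2,
      intervalIntegral.integral_of_le hθ.2, Set.union_singleton,
      Measure.restrict_congr_set (μ := volume) (insert_ae_eq_self θ (Set.Ioc θ b))]
  rw [intervalIntegral.integral_of_le hab, intervalIntegral.integral_of_le hab]
  calc (∫ s, (∫ θ in a..s, g s θ) ∂ρ)
      = ∫ s, (∫ θ, T.indicator (fun p : ℝ × ℝ => g p.1 p.2) (s, θ) ∂ρ) ∂ρ :=
        setIntegral_congr_fun measurableSet_Ioc step_s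
    _ = ∫ θ, (∫ s, T.indicator (fun p : ℝ × ℝ => g p.1 p.2) (s, θ) ∂ρ) ∂ρ := key
    _ = ∫ θ, (∫ s in θ..b, g s θ) ∂ρ := setIntegral_congr_fun measurableSet_Ioc step_t

end AuxGeneric

section AuxMatrix
variable {n0 n1 n2 : ℕ}

lemma mulVec_Tmat_inl (η : ℝ) (v : Ic n1 n2 → ℝ) (i : Fin n1) :
    (Tmat n1 n2 η).mulVec v (.inl i) = v (.inl i) := by
  simp [Tmat, Matrix.mulVec, dotProduct, Fintype.sum_sum_type, ite_mul, Finset.sum_ite_eq]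

lemma mulVec_Tmat_inrl (η : ℝ) (v : Ic n1 n2 → ℝ) (i : Fin n2) :
    (Tmat n1 n2 η).mulVec v (.inr (.inl i)) = v (.inr (.inl i)) + η * v (.inr (.inr i)) := by
  simp [Tmat, Matrix.mulVec, dotProduct, Fintype.sum_sum_type, ite_mul, Finset.sum_ite_eq]

lemma mulVec_Tmat_inrr (η : ℝ) (v : Ic n1 n2 → ℝ) (i : Fin n2) :
    (Tmat n1 n2 η).mulVec v (.inr (.inr i)) = v (.inr (.inr i)) := by
  simp [Tmat, Matrix.mulVec, dotProduct, Fintype.sum_sum_type, ite_mul, Finset.sum_ite_eq]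

lemma mulVec_Qmat_inl (η : ℝ) (v : Ix n0 n1 n2 → ℝ) (i : Fin n1) :
    (Qmat n0 n1 n2 η).mulVec v (.inl i) = v (.inr (.inl i)) := by
  simp [Qmat, Matrix.mulVec, dotProduct, Fintype.sum_sum_type, ite_mul, Finset.sum_ite_eq]

lemma mulVec_Qmat_inrl (η : ℝ) (v : Ix n0 n1 n2 → ℝ) (i : Fin n2) :
    (Qmat n0 n1 n2 η).mulVec v (.inr (.inl i)) = η * v (.inr (.inr i)) := by
  simp [Qmat, Matrix.mulVec, dotProduct, Fintype.sum_sum_type, ite_mul, Finset.sum_ite_eq]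

lemma mulVec_Qmat_inrr (η : ℝ) (v : Ix n0 n1 n2 → ℝ) (i : Fin n2) :
    (Qmat n0 n1 n2 η).mulVec v (.inr (.inr i)) = v (.inr (.inr i)) := by
  simp [Qmat, Matrix.mulVec, dotProduct, Fintype.sum_sum_type, ite_mul, Finset.sum_ite_eq]

lemma mul_U1_apply (M : Matrix (Ic n1 n2) (ID n0 n1 n2) ℝ) (i : Ic n1 n2) (j : Ix n0 n1 n2) :
    (M * U1 n0 n1 n2) i j = M i (.inl j) := by
  simp [U1, Matrix.mul_apply, Fintype.sum_sum_type, mul_ite, Finset.sum_ite_eq']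

lemma mul_U2_apply (M : Matrix (Ic n1 n2) (ID n0 n1 n2) ℝ) (i : Ic n1 n2) (k : Ic n1 n2) :
    (M * U2 n0 n1 n2) i k = M i (.inr k) := by
  simp [U2, Matrix.mul_apply, Fintype.sum_sum_type, mul_ite, Finset.sum_ite_eq']

variable {κ : Type*} [Fintype κ]

lemma mul_Tmat_inl (X : Matrix κ (Ic n1 n2) ℝ) (η : ℝ) (i : κ) (j : Fin n1) :
    (X * Tmat n1 n2 η) i (.inl j) = X i (.inl j) := by
  simp [Tmat, Matrix.mul_apply, Fintype.sum_sum_type, mul_ite, Finset.sum_ite_eq']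

lemma mul_Tmat_inrl (X : Matrix κ (Ic n1 n2) ℝ) (η : ℝ) (i : κ) (j : Fin n2) :
    (X * Tmat n1 n2 η) i (.inr (.inl j)) = X i (.inr (.inl j)) := by
  simp [Tmat, Matrix.mul_apply, Fintype.sum_sum_type, mul_ite, Finset.sum_ite_eq']

lemma mul_Tmat_inrr (X : Matrix κ (Ic n1 n2) ℝ) (η : ℝ) (i : κ) (j : Fin n2) :
    (X * Tmat n1 n2 η) i (.inr (.inr j)) = η * X i (.inr (.inl j)) + X i (.inr (.inr j)) := by
  simp [Tmat, Matrix.mul_apply, Fintype.sum_sum_type, mul_ite, Finset.sum_ite_eq', mul_comm]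

lemma mul_Qmat_inl (X : Matrix κ (Ic n1 n2) ℝ) (η : ℝ) (i : κ) (j : Fin n0) :
    (X * Qmat n0 n1 n2 η) i (.inl j) = 0 := by
  simp [Qmat, Matrix.mul_apply, Fintype.sum_sum_type]

lemma mul_Qmat_inrl (X : Matrix κ (Ic n1 n2) ℝ) (η : ℝ) (i : κ) (j : Fin n1) :
    (X * Qmat n0 n1 n2 η) i (.inr (.inl j)) = X i (.inl j) := by
  simp [Qmat, Matrix.mul_apply, Fintype.sum_sum_type, mul_ite, Finset.sum_ite_eq']

lemma mul_Qmat_inrr (X : Matrix κ (Ic n1 n2) ℝ) (η : ℝ) (i : κ) (j : Fin n2) :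
    (X * Qmat n0 n1 n2 η) i (.inr (.inr j)) = η * X i (.inr (.inl j)) + X i (.inr (.inr j)) := by
  simp [Qmat, Matrix.mul_apply, Fintype.sum_sum_type, mul_ite, Finset.sum_ite_eq', mul_comm]

lemma mulVec_Tstack_inl {a b : ℝ} (w : Ic n1 n2 → ℝ) (k : Ic n1 n2) :
    (Tstack a b n1 n2).mulVec w (.inl k) = (Tmat n1 n2 0).mulVec w k := rfl

lemma mulVec_Tstack_inr {a b : ℝ} (w : Ic n1 n2 → ℝ) (k : Ic n1 n2) :
    (Tstack a b n1 n2).mulVec w (.inr k) = (Tmat n1 n2 (b - a)).mulVec w k := rfl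

lemma mulVec_Qstack_inl (η : ℝ) (v : Ix n0 n1 n2 → ℝ) (k : Ic n1 n2) :
    (Qstack n0 n1 n2 η).mulVec v (.inl k) = 0 := by
  simp [Qstack, Matrix.mulVec, dotProduct]

lemma mulVec_Qstack_inr (η : ℝ) (v : Ix n0 n1 n2 → ℝ) (k : Ic n1 n2) :
    (Qstack n0 n1 n2 η).mulVec v (.inr k) = (Qmat n0 n1 n2 η).mulVec v k := rfl

end AuxMatrix

set_option maxHeartbeats 1000000 in
theorem T_map_b (a b : ℝ) (hab : a < b) (n0 n1 n2 : ℕ)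
    (B : Matrix (Ic n1 n2) (Ic n1 n2 ⊕ Ic n1 n2) ℝ)
    (B_I : ℝ → Matrix (Ic n1 n2) (ID n0 n1 n2) ℝ)
    (hBI : SqIntMat a b B_I)
    (hadm : Admissible a b n0 n1 n2 B B_I)
    (xhat : ℝ → Ix n0 n1 n2 → ℝ) (hmeas : Measurable xhat)
    (hL2 : MemLp xhat 2 (μab a b)) :
    ∃ y : State a b n0 n1 n2, BCholds a b n0 n1 n2 B B_I y ∧
      (∀ᵐ s ∂(μab a b), ∀ i, xfun y s i = Tfun a b n0 n1 n2 B B_I xhat s i) ∧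
      (∀ᵐ s ∂(μab a b), ∀ i, Dx y s i = xhat s i) := by
  have hab' : a ≤ b := hab.le
  have haI : a ∈ Set.Icc a b := ⟨le_rfl, hab'⟩
  have hbI : b ∈ Set.Icc a b := ⟨hab', le_rfl⟩
  -- truncated input
  set f : ℝ → Ix n0 n1 n2 → ℝ := fun s j => if s ∈ Set.Icc a b then xhat s j else 0 with hfdef
  have hf_eq : ∀ s ∈ Set.Icc a b, ∀ j, f s j = xhat s j := fun s hs j => if_pos hs
  have hf_eq' : ∀ s ∈ Set.Icc a b, f s = xhat s := fun s hs => funext (hf_eq s hs)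
  have hxhatj_L2 : ∀ j, MemLp (fun s => xhat s j) 2 (μab a b) := fun j =>
    hL2.of_le ((measurable_pi_apply j).comp hmeas).aestronglyMeasurable
      (Eventually.of_forall fun s => norm_le_pi_norm (xhat s) j)
  have hfj_ind : ∀ j, (fun s => f s j) = Set.indicator (Set.Icc a b) (fun s => xhat s j) := by
    intro j; funext s
    show (if s ∈ Set.Icc a b then xhat s j else 0) = _
    by_cases h : s ∈ Set.Icc a b
    · rw [if_pos h, Set.indicator_of_mem h]
    · rw [if_neg h, Set.indicator_of_notMem h]
  have hfj_L2 : ∀ j, MemLp (fun s => f s j) 2 (μab a b) := by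
    intro j
    refine (hxhatj_L2 j).ae_eq ?_
    filter_upwards [ae_restrict_mem measurableSet_Icc] with s hs
    exact (hf_eq s hs j).symm
  have hfj_int : ∀ j, Integrable (fun s => f s j) volume := by
    intro j
    rw [hfj_ind j]
    exact IntegrableOn.integrable_indicator ((hxhatj_L2 j).integrable one_le_two)
      measurableSet_Icc
  have hfj_ii : ∀ j (c d : ℝ), IntervalIntegrable (fun s => f s j) volume c d := fun j c d =>
    (hfj_int j).intervalIntegrable
  have hft_int : ∀ j, Integrable (fun s => s * f s j) volume := by
    intro j
    have : (fun s => s * f s j) = Set.indicator (Set.Icc a b) (fun s => s * xhat s j) := by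
      funext s
      show s * (if s ∈ Set.Icc a b then xhat s j else 0) = _
      by_cases h : s ∈ Set.Icc a b
      · rw [if_pos h, Set.indicator_of_mem h]
      · rw [if_neg h, Set.indicator_of_notMem h, mul_zero]
    rw [this]
    exact IntegrableOn.integrable_indicator
      (integrable_mul_L2 (continuous_memLp2 continuous_id) (hxhatj_L2 j)) measurableSet_Icc
  have hft_ii : ∀ j (c d : ℝ), IntervalIntegrable (fun s => s * f s j) volume c d := fun j c d =>
    (hft_int j).intervalIntegrable
  have hP_cont : ∀ j, Continuous fun s => ∫ θ in a..s, f θ j := fun j =>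
    intervalIntegral.continuous_primitive (fun c d => hfj_ii j c d) a
  -- truncated boundary-matrix entries
  set BIc : Ic n1 n2 → Ic n1 n2 → ℝ → ℝ :=
    fun l k β => if β ∈ Set.Icc a b then B_I β l (.inr k) else 0 with hBIcdef
  have hBIc_eq : ∀ l k, ∀ β ∈ Set.Icc a b, BIc l k β = B_I β l (.inr k) :=
    fun l k β hβ => if_pos hβ
  have hBIc_L2 : ∀ l k, MemLp (BIc l k) 2 (μab a b) := by
    intro l k
    refine (hBI.2 l (.inr k)).ae_eq ?_
    filter_upwards [ae_restrict_mem measurableSet_Icc] with β hβ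
    exact (hBIc_eq l k β hβ).symm
  have hBIc_int : ∀ l k, Integrable (BIc l k) volume := by
    intro l k
    have : BIc l k = Set.indicator (Set.Icc a b) (fun β => B_I β l (.inr k)) := by
      funext β
      show (if β ∈ Set.Icc a b then B_I β l (.inr k) else 0) = _
      by_cases h : β ∈ Set.Icc a b
      · rw [if_pos h, Set.indicator_of_mem h]
      · rw [if_neg h, Set.indicator_of_notMem h]
    rw [this]
    exact IntegrableOn.integrable_indicator ((hBI.2 l (.inr k)).integrable one_le_two)
      measurableSet_Icc
  have hBIc_ii : ∀ l k (c d : ℝ), IntervalIntegrable (BIc l k) volume c d := fun l k c d =>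
    (hBIc_int l k).intervalIntegrable
  have hBIct_int : ∀ l k, Integrable (fun β => β * BIc l k β) volume := by
    intro l k
    have : (fun β => β * BIc l k β)
        = Set.indicator (Set.Icc a b) (fun β => β * B_I β l (.inr k)) := by
      funext β
      show β * (if β ∈ Set.Icc a b then B_I β l (.inr k) else 0) = _
      by_cases h : β ∈ Set.Icc a b
      · rw [if_pos h, Set.indicator_of_mem h]
      · rw [if_neg h, Set.indicator_of_notMem h, mul_zero]
    rw [this]
    exact IntegrableOn.integrable_indicator
      (integrable_mul_L2 (continuous_memLp2 continuous_id) (hBI.2 l (.inr k)))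
      measurableSet_Icc
  have hBIct_ii : ∀ l k (c d : ℝ), IntervalIntegrable (fun β => β * BIc l k β) volume c d :=
    fun l k c d => (hBIct_int l k).intervalIntegrable
  -- continuity of reverse primitives
  have hprim : ∀ (g : ℝ → ℝ), (∀ c d : ℝ, IntervalIntegrable g volume c d) →
      Continuous fun θ => ∫ β in θ..b, g β := by
    intro g hg
    have : (fun θ => ∫ β in θ..b, g β) = fun θ => -∫ β in b..θ, g β := by
      funext θ; rw [intervalIntegral.integral_symm]
    rw [this]
    exact (intervalIntegral.continuous_primitive hg b).neg
  -- entries of the tail-integral part of M are L2 (equal a.e. to continuous functions)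
  have hMint_L2 : ∀ (l : Ic n1 n2) (j : Ix n0 n1 n2),
      MemLp (fun θ => ∫ β in θ..b, (B_I β * U2 n0 n1 n2 * Qmat n0 n1 n2 (β - θ)) l j) 2
        (μab a b) := by
    intro l j
    obtain j | j | j := j
    · have : (fun θ => ∫ β in θ..b, (B_I β * U2 n0 n1 n2 * Qmat n0 n1 n2 (β - θ)) l (.inl j))
          = fun _ => (0 : ℝ) := by
        funext θ
        simp [mul_Qmat_inl]
      rw [this]
      exact memLp_const 0
    · have hcont : Continuous fun θ => ∫ β in θ..b, BIc l (.inl j) β :=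
        hprim _ (hBIc_ii l (.inl j))
      refine (continuous_memLp2 hcont).ae_eq ?_
      filter_upwards [ae_restrict_mem measurableSet_Icc] with θ hθ
      refine intervalIntegral.integral_congr fun β hβ => ?_
      have hβ' : β ∈ Set.Icc a b := by
        rw [Set.uIcc_of_le hθ.2] at hβ
        exact ⟨hθ.1.trans hβ.1, hβ.2⟩
      rw [mul_Qmat_inrl, mul_U2_apply, hBIc_eq l _ β hβ']
    · have hcont : Continuous fun θ =>
          ((∫ β in θ..b, β * BIc l (.inr (.inl j)) β)
            - θ * ∫ β in θ..b, BIc l (.inr (.inl j)) β)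
          + ∫ β in θ..b, BIc l (.inr (.inr j)) β := by
        have c1 := hprim _ (hBIct_ii l (.inr (.inl j)))
        have c2 := hprim _ (hBIc_ii l (.inr (.inl j)))
        have c3 := hprim _ (hBIc_ii l (.inr (.inr j)))
        exact (c1.sub (continuous_id.mul c2)).add c3
      refine (continuous_memLp2 hcont).ae_eq ?_
      filter_upwards [ae_restrict_mem measurableSet_Icc] with θ hθ
      have hsub : Set.uIcc θ b ⊆ Set.Icc a b := by
        rw [Set.uIcc_of_le hθ.2]
        exact fun β hβ => ⟨hθ.1.trans hβ.1, hβ.2⟩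
      have e1 : Set.EqOn
          (fun β => (B_I β * U2 n0 n1 n2 * Qmat n0 n1 n2 (β - θ)) l (.inr (.inr j)))
          (fun β => (β * BIc l (.inr (.inl j)) β - θ * BIc l (.inr (.inl j)) β)
            + BIc l (.inr (.inr j)) β) (Set.uIcc θ b) := by
        intro β hβ
        simp only
        rw [mul_Qmat_inrr, mul_U2_apply, mul_U2_apply, hBIc_eq _ _ β (hsub hβ),
          hBIc_eq _ _ β (hsub hβ)]
        ring
      rw [intervalIntegral.integral_congr e1,
        intervalIntegral.integral_add
          (((hBIct_ii l (.inr (.inl j)) θ b).sub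
            ((hBIc_ii l (.inr (.inl j)) θ b).const_mul θ)))
          (hBIc_ii l (.inr (.inr j)) θ b),
        intervalIntegral.integral_sub (hBIct_ii l (.inr (.inl j)) θ b)
          ((hBIc_ii l (.inr (.inl j)) θ b).const_mul θ),
        intervalIntegral.integral_const_mul]
  have hBrQ : ∀ η : ℝ, B * Qstack n0 n1 n2 η
      = (Matrix.of fun l k => B l (Sum.inr k)) * Qmat n0 n1 n2 η := by
    intro η
    ext l j
    rw [Matrix.mul_apply, Fintype.sum_sum_type, Matrix.mul_apply]
    simp [Qstack]
  have hBQstack_cont : ∀ (l : Ic n1 n2) (j : Ix n0 n1 n2),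
      Continuous fun θ => (B * Qstack n0 n1 n2 (b - θ)) l j := by
    intro l j
    simp only [hBrQ]
    obtain j | j | j := j
    · simp only [mul_Qmat_inl]
      exact continuous_const
    · simp only [mul_Qmat_inrl]
      exact continuous_const
    · simp only [mul_Qmat_inrr]
      exact (((continuous_const.sub continuous_id).mul continuous_const).add continuous_const)
  set Mfun : ℝ → Matrix (Ic n1 n2) (Ix n0 n1 n2) ℝ := fun θ =>
    B_I θ * U1 n0 n1 n2 - B * Qstack n0 n1 n2 (b - θ) +
      Matrix.of fun i j => ∫ β in θ..b, (B_I β * U2 n0 n1 n2 * Qmat n0 n1 n2 (β - θ)) i j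
    with hMfun
  have hBQdef : ∀ θ, BQ a b n0 n1 n2 B B_I θ = (BT a b n0 n1 n2 B B_I)⁻¹ * Mfun θ :=
    fun θ => rfl
  have hM_L2 : ∀ l j, MemLp (fun θ => Mfun θ l j) 2 (μab a b) := by
    intro l j
    have he : (fun θ => Mfun θ l j) = fun θ =>
        (B_I θ l (.inl j) - (B * Qstack n0 n1 n2 (b - θ)) l j)
          + ∫ β in θ..b, (B_I β * U2 n0 n1 n2 * Qmat n0 n1 n2 (β - θ)) l j := by
      funext θ
      simp [hMfun, Matrix.sub_apply, Matrix.add_apply, mul_U1_apply]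
    rw [he]
    exact ((hBI.2 l (.inl j)).sub (continuous_memLp2 (hBQstack_cont l j))).add (hMint_L2 l j)
  have hBQ_L2 : ∀ k j, MemLp (fun θ => BQ a b n0 n1 n2 B B_I θ k j) 2 (μab a b) := by
    intro k j
    have he : (fun θ => BQ a b n0 n1 n2 B B_I θ k j)
        = fun θ => ∑ l, (BT a b n0 n1 n2 B B_I)⁻¹ k l * Mfun θ l j := by
      funext θ
      rw [hBQdef θ, Matrix.mul_apply]
    rw [he]
    exact memLp_finset_sum Finset.univ fun l _ => (hM_L2 l j).const_mul _
  have hmv : ∀ (M : Matrix (Ic n1 n2) (Ix n0 n1 n2) ℝ) (v : Ix n0 n1 n2 → ℝ) (k : Ic n1 n2),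
      M.mulVec v k = ∑ j, M k j * v j := fun M v k => rfl
  have hBQf_int : ∀ (k : Ic n1 n2) (v : ℝ → Ix n0 n1 n2 → ℝ),
      (∀ j, MemLp (fun θ => v θ j) 2 (μab a b)) →
      Integrable (fun θ => (BQ a b n0 n1 n2 B B_I θ).mulVec (v θ) k) (μab a b) := by
    intro k v hv
    have he : (fun θ => (BQ a b n0 n1 n2 B B_I θ).mulVec (v θ) k)
        = fun θ => ∑ j, BQ a b n0 n1 n2 B B_I θ k j * v θ j := by
      funext θ
      exact hmv _ _ _
    rw [he]
    exact integrable_finset_sum _ fun j _ => integrable_mul_L2 (hBQ_L2 k j) (hv j)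
  set w : Ic n1 n2 → ℝ :=
    fun k => ∫ θ in a..b, (BQ a b n0 n1 n2 B B_I θ).mulVec (f θ) k with hwdef
  -- the component functions
  set x1F : ℝ → Fin n1 → ℝ :=
    fun s i => w (.inl i) + ∫ θ in a..s, f θ (.inr (.inl i)) with hx1F
  set dx2F : ℝ → Fin n2 → ℝ :=
    fun s i => w (.inr (.inr i)) + ∫ θ in a..s, f θ (.inr (.inr i)) with hdx2F
  set x2F : ℝ → Fin n2 → ℝ :=
    fun s i => w (.inr (.inl i)) + ∫ θ in a..s, dx2F θ i with hx2F
  have hmem0 : MemLp (fun s (i : Fin n0) => f s (.inl i)) 2 (μab a b) :=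
    memLp_pi2 fun i => hfj_L2 _
  have hmem1 : MemLp (fun s (i : Fin n1) => f s (.inr (.inl i))) 2 (μab a b) :=
    memLp_pi2 fun i => hfj_L2 _
  have hmem3 : MemLp (fun s (i : Fin n2) => f s (.inr (.inr i))) 2 (μab a b) :=
    memLp_pi2 fun i => hfj_L2 _
  have hdx2F_cont : ∀ i, Continuous fun s => dx2F s i := by
    intro i
    rw [hdx2F]
    exact continuous_const.add (hP_cont _)
  have hmem2 : MemLp dx2F 2 (μab a b) :=
    memLp_pi2 fun i => continuous_memLp2 (hdx2F_cont i)
  set y : State a b n0 n1 n2 :=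
    { x0 := fun s i => f s (.inl i)
      x1 := x1F
      dx1 := fun s i => f s (.inr (.inl i))
      x2 := x2F
      dx2 := dx2F
      ddx2 := fun s i => f s (.inr (.inr i))
      memLp_x0 := hmem0
      memLp_dx1 := hmem1
      memLp_dx2 := hmem2
      memLp_ddx2 := hmem3
      ftc_x1 := by
        intro s hs i
        rw [hx1F]
        simp
      ftc_x2 := by
        intro s hs i
        rw [hx2F]
        simp
      ftc_dx2 := by
        intro s hs i
        rw [hdx2F]
        simp } with hy
  have hDxy : ∀ s, Dx y s = f s := by
    intro s
    funext j
    obtain j | j | j := j <;> rfl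
  have hxcy : ∀ s k, xc y s k = Sum.elim (x1F s) (Sum.elim (x2F s) (dx2F s)) k := by
    intro s k
    obtain k | k | k := k <;> rfl
  -- the closed form of xc
  have hA : ∀ (j : Ix n0 n1 n2) (s : ℝ), s ∈ Set.Icc a b →
      (∫ θ in a..s, (∫ β in a..θ, f β j)) = ∫ θ in a..s, (s - θ) * f θ j := by
    intro j s hs
    have hint : Integrable (fun p : ℝ × ℝ => f p.2 j)
        ((volume.restrict (Set.Ioc a s)).prod (volume.restrict (Set.Ioc a s))) := by
      have := (integrable_const (1:ℝ)
          (μ := volume.restrict (Set.Ioc a s))).mul_prod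
        ((hfj_int j).restrict (s := Set.Ioc a s))
      simpa using this
    have hsw := swap_triangle hs.1 (fun _ β => f β j) hint
    rw [hsw]
    refine intervalIntegral.integral_congr fun θ hθ => ?_
    simp [intervalIntegral.integral_const, smul_eq_mul, mul_comm]
  have hxc : ∀ s ∈ Set.Icc a b, ∀ k, xc y s k
      = (Tmat n1 n2 (s - a)).mulVec w k
        + ∫ θ in a..s, (Qmat n0 n1 n2 (s - θ)).mulVec (f θ) k := by
    intro s hs k
    rw [hxcy]
    obtain k | k | k := k
    · rw [Sum.elim_inl, mulVec_Tmat_inl, hx1F]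
      dsimp only
      congr 1
      refine (intervalIntegral.integral_congr fun θ _ => ?_).symm
      exact mulVec_Qmat_inl _ _ _
    · rw [Sum.elim_inr, Sum.elim_inl, mulVec_Tmat_inrl, hx2F]
      simp only
      have h1 : (∫ θ in a..s, dx2F θ k)
          = (s - a) * w (.inr (.inr k)) + ∫ θ in a..s, (∫ β in a..θ, f β (.inr (.inr k))) := by
        rw [hdx2F]
        dsimp only
        rw [intervalIntegral.integral_add
          (intervalIntegrable_const (c := w (Sum.inr (Sum.inr k))))
          ((hP_cont (.inr (.inr k))).intervalIntegrable _ _), intervalIntegral.integral_const,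
          smul_eq_mul]
      rw [h1, hA _ s hs,
        show (∫ θ in a..s, (Qmat n0 n1 n2 (s - θ)).mulVec (f θ) (.inr (.inl k)))
          = ∫ θ in a..s, (s - θ) * f θ (.inr (.inr k)) from
          intervalIntegral.integral_congr fun θ _ => mulVec_Qmat_inrl _ _ _]
      ring
    · rw [Sum.elim_inr, Sum.elim_inr, mulVec_Tmat_inrr, hdx2F]
      dsimp only
      congr 1
      refine (intervalIntegral.integral_congr fun θ _ => ?_).symm
      exact mulVec_Qmat_inrr _ _ _
  refine ⟨y, ?_, ?_, ?_⟩
  · -- the boundary condition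
    intro i
    -- generic expansions of mulVec
    have hmvB : ∀ (v : (Ic n1 n2 ⊕ Ic n1 n2) → ℝ), B.mulVec v i
        = (∑ k, B i (Sum.inl k) * v (Sum.inl k)) + ∑ k, B i (Sum.inr k) * v (Sum.inr k) := by
      intro v
      rw [show B.mulVec v i = ∑ K, B i K * v K from rfl, Fintype.sum_sum_type]
    have hmvBI : ∀ (s : ℝ) (v : ID n0 n1 n2 → ℝ), (B_I s).mulVec v i
        = (∑ j, B_I s i (Sum.inl j) * v (Sum.inl j))
          + ∑ k, B_I s i (Sum.inr k) * v (Sum.inr k) := by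
      intro s v
      rw [show (B_I s).mulVec v i = ∑ K, B_I s i K * v K from rfl, Fintype.sum_sum_type]
    -- boundary values of xc
    have hxca : ∀ k, xc y a k = (Tmat n1 n2 0).mulVec w k := by
      intro k
      rw [hxc a haI k, sub_self, intervalIntegral.integral_same, add_zero]
    have hxcb : ∀ k, xc y b k = (Tmat n1 n2 (b - a)).mulVec w k
        + ∫ θ in a..b, (Qmat n0 n1 n2 (b - θ)).mulVec (f θ) k := hxc b hbI
    -- integrability of the Q-convolution integrand
    have hQv_ii : ∀ (s' : ℝ) (k : Ic n1 n2) (c d : ℝ),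
        IntervalIntegrable (fun θ => (Qmat n0 n1 n2 (s' - θ)).mulVec (f θ) k) volume c d := by
      intro s' k c d
      obtain k | k | k := k
      · simp_rw [mulVec_Qmat_inl]
        exact hfj_ii _ _ _
      · simp_rw [mulVec_Qmat_inrl]
        have he : (fun θ => (s' - θ) * f θ (.inr (.inr k)))
            = fun θ => s' * f θ (.inr (.inr k)) - θ * f θ (.inr (.inr k)) :=
          funext fun θ => by ring
        rw [he]
        exact ((hfj_ii _ c d).const_mul s').sub (hft_ii _ c d)
      · simp_rw [mulVec_Qmat_inrr]
        exact hfj_ii _ _ _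
    -- B * Qstack expansion
    have hBQsv : ∀ (η : ℝ) (v : Ix n0 n1 n2 → ℝ), (B * Qstack n0 n1 n2 η).mulVec v i
        = ∑ k, B i (Sum.inr k) * (Qmat n0 n1 n2 η).mulVec v k := by
      intro η v
      rw [← Matrix.mulVec_mulVec, hmvB]
      simp_rw [mulVec_Qstack_inl, mul_zero, Finset.sum_const_zero, zero_add,
        mulVec_Qstack_inr]
    -- (L) the left-hand side
    have eqL : B.mulVec (xb y) i = (B * Tstack a b n1 n2).mulVec w i
        + ∫ θ in a..b, (B * Qstack n0 n1 n2 (b - θ)).mulVec (f θ) i := by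
      rw [hmvB]
      have h1 : ∀ k, xb y (Sum.inl k) = (Tmat n1 n2 0).mulVec w k := fun k => hxca k
      have h2 : ∀ k, xb y (Sum.inr k) = (Tmat n1 n2 (b - a)).mulVec w k
          + ∫ θ in a..b, (Qmat n0 n1 n2 (b - θ)).mulVec (f θ) k := fun k => hxcb k
      simp_rw [h1, h2, mul_add, Finset.sum_add_distrib]
      have h3 : (B * Tstack a b n1 n2).mulVec w i
          = (∑ k, B i (Sum.inl k) * (Tmat n1 n2 0).mulVec w k)
            + ∑ k, B i (Sum.inr k) * (Tmat n1 n2 (b - a)).mulVec w k := by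
        rw [← Matrix.mulVec_mulVec, hmvB]
        simp_rw [mulVec_Tstack_inl, mulVec_Tstack_inr]
      have h4 : (∑ k, B i (Sum.inr k) * ∫ θ in a..b, (Qmat n0 n1 n2 (b - θ)).mulVec (f θ) k)
          = ∫ θ in a..b, (B * Qstack n0 n1 n2 (b - θ)).mulVec (f θ) i := by
        simp_rw [← intervalIntegral.integral_const_mul]
        rw [← intervalIntegral.integral_finset_sum
          (fun k _ => (hQv_ii b k a b).const_mul (B i (Sum.inr k)))]
        exact intervalIntegral.integral_congr fun θ _ => (hBQsv (b - θ) (f θ)).symm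
      rw [h3, h4]
      ring
    -- the K matrix
    set Kmat : Matrix (Ic n1 n2) (Ic n1 n2) ℝ :=
      Matrix.of fun l j => ∫ s in a..b, (B_I s * U2 n0 n1 n2 * Tmat n1 n2 (s - a)) l j
      with hKmat
    have hBTdef : BT a b n0 n1 n2 B B_I = B * Tstack a b n1 n2 - Kmat := rfl
    -- entries of B_I * U2 * Tmat are interval integrable
    have hKent_ii : ∀ (l : Ic n1 n2) (j : Ic n1 n2) {c d : ℝ}, a ≤ c → c ≤ b → a ≤ d → d ≤ b →
        IntervalIntegrable (fun s => (B_I s * U2 n0 n1 n2 * Tmat n1 n2 (s - a)) l j)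
          volume c d := by
      intro l j c d h1 h2 h3 h4
      obtain j | j | j := j
      · simp_rw [mul_Tmat_inl, mul_U2_apply]
        exact intervalIntegrable_of_memab ((hBI.2 l _).integrable one_le_two) h1 h3 h2 h4
      · simp_rw [mul_Tmat_inrl, mul_U2_apply]
        exact intervalIntegrable_of_memab ((hBI.2 l _).integrable one_le_two) h1 h3 h2 h4
      · simp_rw [mul_Tmat_inrr, mul_U2_apply]
        have he : (fun s => (s - a) * B_I s l (Sum.inr (Sum.inr (Sum.inl j)))
              + B_I s l (Sum.inr (Sum.inr (Sum.inr j))))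
            = fun s => (s * B_I s l (Sum.inr (Sum.inr (Sum.inl j)))
              - a * B_I s l (Sum.inr (Sum.inr (Sum.inl j))))
              + B_I s l (Sum.inr (Sum.inr (Sum.inr j))) := funext fun s => by ring
        rw [he]
        refine IntervalIntegrable.add (IntervalIntegrable.sub ?_ ?_) ?_
        · exact intervalIntegrable_of_memab
            (integrable_mul_L2 (continuous_memLp2 continuous_id) (hBI.2 l _)) h1 h3 h2 h4
        · exact (intervalIntegrable_of_memab ((hBI.2 l _).integrable one_le_two)
            h1 h3 h2 h4).const_mul a
        · exact intervalIntegrable_of_memab ((hBI.2 l _).integrable one_le_two) h1 h3 h2 h4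
    -- T-term rewriting
    have hTswap : ∀ s : ℝ, (∑ k, B_I s i (Sum.inr k) * (Tmat n1 n2 (s - a)).mulVec w k)
        = ∑ j, (B_I s * U2 n0 n1 n2 * Tmat n1 n2 (s - a)) i j * w j := by
      intro s
      calc (∑ k, B_I s i (Sum.inr k) * (Tmat n1 n2 (s - a)).mulVec w k)
          = ∑ k, (B_I s * U2 n0 n1 n2) i k * (Tmat n1 n2 (s - a)).mulVec w k := by
            simp_rw [mul_U2_apply]
        _ = ((B_I s * U2 n0 n1 n2).mulVec ((Tmat n1 n2 (s - a)).mulVec w)) i := rfl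
        _ = ((B_I s * U2 n0 n1 n2 * Tmat n1 n2 (s - a)).mulVec w) i := by
            rw [Matrix.mulVec_mulVec]
        _ = ∑ j, (B_I s * U2 n0 n1 n2 * Tmat n1 n2 (s - a)) i j * w j := rfl
    have eqT : (∫ s in a..b, ∑ k, B_I s i (Sum.inr k) * (Tmat n1 n2 (s - a)).mulVec w k)
        = Kmat.mulVec w i := by
      simp_rw [hTswap]
      rw [intervalIntegral.integral_finset_sum
        (fun j _ => (hKent_ii i j le_rfl hab' hab' le_rfl).mul_const (w j))]
      simp_rw [intervalIntegral.integral_mul_const]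
      rfl
    -- core identity coupling w with Mfun
    have hBTBQ : ∀ θ, BT a b n0 n1 n2 B B_I * BQ a b n0 n1 n2 B B_I θ = Mfun θ := by
      intro θ
      rw [hBQdef θ, ← Matrix.mul_assoc, Matrix.mul_nonsing_inv _ hadm, Matrix.one_mul]
    have hBQfab_ii : ∀ (l : Ic n1 n2), IntervalIntegrable
        (fun θ => (BQ a b n0 n1 n2 B B_I θ).mulVec (f θ) l) volume a b :=
      fun l => intervalIntegrable_of_memab (hBQf_int l f hfj_L2) le_rfl hab' hab' le_rfl
    have hcore : (BT a b n0 n1 n2 B B_I).mulVec w i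
        = ∫ θ in a..b, (Mfun θ).mulVec (f θ) i := by
      have h1 : (BT a b n0 n1 n2 B B_I).mulVec w i
          = ∑ l, BT a b n0 n1 n2 B B_I i l * w l := rfl
      rw [h1]
      simp only [hwdef]
      simp_rw [← intervalIntegral.integral_const_mul]
      rw [← intervalIntegral.integral_finset_sum
        (fun l _ => (hBQfab_ii l).const_mul (BT a b n0 n1 n2 B B_I i l))]
      refine intervalIntegral.integral_congr fun θ _ => ?_
      calc (∑ l, BT a b n0 n1 n2 B B_I i l * (BQ a b n0 n1 n2 B B_I θ).mulVec (f θ) l)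
          = ((BT a b n0 n1 n2 B B_I).mulVec ((BQ a b n0 n1 n2 B B_I θ).mulVec (f θ))) i := rfl
        _ = ((BT a b n0 n1 n2 B B_I * BQ a b n0 n1 n2 B B_I θ).mulVec (f θ)) i := by
            rw [Matrix.mulVec_mulVec]
        _ = (Mfun θ).mulVec (f θ) i := by rw [hBTBQ θ]
    -- splitting the Mfun integral
    have hMsplit : ∀ θ, (Mfun θ).mulVec (f θ) i
        = (B_I θ * U1 n0 n1 n2).mulVec (f θ) i
          - (B * Qstack n0 n1 n2 (b - θ)).mulVec (f θ) i
          + (Matrix.of fun l j =>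
              ∫ β in θ..b, (B_I β * U2 n0 n1 n2 * Qmat n0 n1 n2 (β - θ)) l j).mulVec (f θ) i := by
      intro θ
      rw [hMfun]
      dsimp only
      rw [Matrix.add_mulVec, Matrix.sub_mulVec]
      rfl
    have hE1form : ∀ θ : ℝ, (B_I θ * U1 n0 n1 n2).mulVec (f θ) i
        = ∑ j, B_I θ i (Sum.inl j) * f θ j := by
      intro θ
      rw [show (B_I θ * U1 n0 n1 n2).mulVec (f θ) i
        = ∑ j, (B_I θ * U1 n0 n1 n2) i j * f θ j from rfl]
      simp_rw [mul_U1_apply]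
    have hE1_ii : IntervalIntegrable (fun θ => (B_I θ * U1 n0 n1 n2).mulVec (f θ) i)
        volume a b := by
      simp_rw [hE1form]
      refine intervalIntegrable_of_memab ?_ le_rfl hab' hab' le_rfl
      exact integrable_finset_sum _ fun j _ =>
        integrable_mul_L2 (hBI.2 i (Sum.inl j)) (hfj_L2 j)
    have hE2_ii : IntervalIntegrable
        (fun θ => (B * Qstack n0 n1 n2 (b - θ)).mulVec (f θ) i) volume a b := by
      simp_rw [hBQsv]
      have hsum := IntervalIntegrable.sum
        (f := fun k θ => B i (Sum.inr k) * (Qmat n0 n1 n2 (b - θ)).mulVec (f θ) k)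
        Finset.univ (fun k _ => (hQv_ii b k a b).const_mul _)
      have hfc : (∑ k : Ic n1 n2, fun θ => B i (Sum.inr k) * (Qmat n0 n1 n2 (b - θ)).mulVec (f θ) k)
          = fun θ => ∑ k : Ic n1 n2, B i (Sum.inr k) * (Qmat n0 n1 n2 (b - θ)).mulVec (f θ) k := by
        funext θ
        simp [Finset.sum_apply]
      rwa [hfc] at hsum
    have hE3_ii : IntervalIntegrable (fun θ => (Matrix.of fun l j =>
          ∫ β in θ..b, (B_I β * U2 n0 n1 n2 * Qmat n0 n1 n2 (β - θ)) l j).mulVec (f θ) i)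
        volume a b := by
      have he : (fun θ => (Matrix.of fun l j =>
            ∫ β in θ..b, (B_I β * U2 n0 n1 n2 * Qmat n0 n1 n2 (β - θ)) l j).mulVec (f θ) i)
          = fun θ => ∑ j, (∫ β in θ..b, (B_I β * U2 n0 n1 n2 * Qmat n0 n1 n2 (β - θ)) i j)
              * f θ j := rfl
      rw [he]
      refine intervalIntegrable_of_memab ?_ le_rfl hab' hab' le_rfl
      exact integrable_finset_sum _ fun j _ => integrable_mul_L2 (hMint_L2 i j) (hfj_L2 j)
    have hMint_eq : (∫ θ in a..b, (Mfun θ).mulVec (f θ) i)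
        = (∫ θ in a..b, (B_I θ * U1 n0 n1 n2).mulVec (f θ) i)
          - (∫ θ in a..b, (B * Qstack n0 n1 n2 (b - θ)).mulVec (f θ) i)
          + ∫ θ in a..b, (Matrix.of fun l j =>
              ∫ β in θ..b, (B_I β * U2 n0 n1 n2 * Qmat n0 n1 n2 (β - θ)) l j).mulVec (f θ) i := by
      simp_rw [hMsplit]
      rw [intervalIntegral.integral_add (hE1_ii.sub hE2_ii) hE3_ii,
        intervalIntegral.integral_sub hE1_ii hE2_ii]
    -- decomposition of the right-hand side
    have hTm_cont : ∀ k, Continuous fun s => (Tmat n1 n2 (s - a)).mulVec w k := by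
      intro k
      obtain k | k | k := k
      · simp_rw [mulVec_Tmat_inl]
        exact continuous_const
      · simp_rw [mulVec_Tmat_inrl]
        exact continuous_const.add ((continuous_id.sub continuous_const).mul continuous_const)
      · simp_rw [mulVec_Tmat_inrr]
        exact continuous_const
    have hJs_cont : ∀ k, Continuous fun s =>
        ∫ θ in a..s, (Qmat n0 n1 n2 (s - θ)).mulVec (f θ) k := by
      intro k
      obtain k | k | k := k
      · simp_rw [mulVec_Qmat_inl]
        exact hP_cont _
      · simp_rw [mulVec_Qmat_inrl]
        have he : (fun s => ∫ θ in a..s, (s - θ) * f θ (.inr (.inr k)))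
            = fun s => s * (∫ θ in a..s, f θ (.inr (.inr k)))
              - ∫ θ in a..s, θ * f θ (.inr (.inr k)) := by
          funext s
          rw [← intervalIntegral.integral_const_mul, ← intervalIntegral.integral_sub
            ((hfj_ii _ a s).const_mul s) (hft_ii _ a s)]
          exact intervalIntegral.integral_congr fun θ _ => by ring
        rw [he]
        exact (continuous_id.mul (hP_cont _)).sub
          (intervalIntegral.continuous_primitive (hft_ii _) a)
      · simp_rw [mulVec_Qmat_inrr]
        exact hP_cont _
    have hA_ii : IntervalIntegrable (fun s => ∑ j, B_I s i (Sum.inl j) * f s j) volume a b := by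
      refine intervalIntegrable_of_memab ?_ le_rfl hab' hab' le_rfl
      exact integrable_finset_sum _ fun j _ =>
        integrable_mul_L2 (hBI.2 i (Sum.inl j)) (hfj_L2 j)
    have hT_ii : IntervalIntegrable
        (fun s => ∑ k, B_I s i (Sum.inr k) * (Tmat n1 n2 (s - a)).mulVec w k) volume a b := by
      refine intervalIntegrable_of_memab ?_ le_rfl hab' hab' le_rfl
      exact integrable_finset_sum _ fun k _ =>
        integrable_mul_L2 (hBI.2 i (Sum.inr k)) (continuous_memLp2 (hTm_cont k))
    have hJ_ii : IntervalIntegrable (fun s => ∑ k, B_I s i (Sum.inr k) *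
        ∫ θ in a..s, (Qmat n0 n1 n2 (s - θ)).mulVec (f θ) k) volume a b := by
      refine intervalIntegrable_of_memab ?_ le_rfl hab' hab' le_rfl
      exact integrable_finset_sum _ fun k _ =>
        integrable_mul_L2 (hBI.2 i (Sum.inr k)) (continuous_memLp2 (hJs_cont k))
    have eqR : (∫ s in a..b, (B_I s).mulVec (xD y s) i)
        = (∫ s in a..b, ∑ j, B_I s i (Sum.inl j) * f s j)
          + ((∫ s in a..b, ∑ k, B_I s i (Sum.inr k) * (Tmat n1 n2 (s - a)).mulVec w k)
            + ∫ s in a..b, ∑ k, B_I s i (Sum.inr k) *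
                ∫ θ in a..s, (Qmat n0 n1 n2 (s - θ)).mulVec (f θ) k) := by
      have hint : Set.EqOn (fun s => (B_I s).mulVec (xD y s) i)
          (fun s => (∑ j, B_I s i (Sum.inl j) * f s j)
            + ((∑ k, B_I s i (Sum.inr k) * (Tmat n1 n2 (s - a)).mulVec w k)
              + ∑ k, B_I s i (Sum.inr k) *
                  ∫ θ in a..s, (Qmat n0 n1 n2 (s - θ)).mulVec (f θ) k))
          (Set.uIcc a b) := by
        intro s hsu
        have hs : s ∈ Set.Icc a b := by rwa [Set.uIcc_of_le hab'] at hsu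
        simp only
        rw [hmvBI]
        have hxD1 : ∀ j, xD y s (Sum.inl j) = f s j := by
          intro j
          show Dx y s j = f s j
          rw [hDxy]
        have hxD2 : ∀ k, xD y s (Sum.inr k) = (Tmat n1 n2 (s - a)).mulVec w k
            + ∫ θ in a..s, (Qmat n0 n1 n2 (s - θ)).mulVec (f θ) k := by
          intro k
          show xc y s k = _
          exact hxc s hs k
        simp_rw [hxD1, hxD2, mul_add, Finset.sum_add_distrib]
      rw [intervalIntegral.integral_congr hint,
        intervalIntegral.integral_add hA_ii (hT_ii.add hJ_ii),
        intervalIntegral.integral_add hT_ii hJ_ii]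
    have eqA : (∫ s in a..b, ∑ j, B_I s i (Sum.inl j) * f s j)
        = ∫ θ in a..b, (B_I θ * U1 n0 n1 n2).mulVec (f θ) i := by
      simp_rw [hE1form]
    -- the Fubini step
    have hNform : ∀ s θ : ℝ,
        (∑ k, B_I s i (Sum.inr k) * (Qmat n0 n1 n2 (s - θ)).mulVec (f θ) k)
        = ∑ j, (B_I s * U2 n0 n1 n2 * Qmat n0 n1 n2 (s - θ)) i j * f θ j := by
      intro s θ
      calc (∑ k, B_I s i (Sum.inr k) * (Qmat n0 n1 n2 (s - θ)).mulVec (f θ) k)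
          = ∑ k, (B_I s * U2 n0 n1 n2) i k * (Qmat n0 n1 n2 (s - θ)).mulVec (f θ) k := by
            simp_rw [mul_U2_apply]
        _ = ((B_I s * U2 n0 n1 n2).mulVec ((Qmat n0 n1 n2 (s - θ)).mulVec (f θ))) i := rfl
        _ = ((B_I s * U2 n0 n1 n2 * Qmat n0 n1 n2 (s - θ)).mulVec (f θ)) i := by
            rw [Matrix.mulVec_mulVec]
        _ = _ := rfl
    have hBIres : ∀ d : ID n0 n1 n2,
        Integrable (fun s => B_I s i d) (volume.restrict (Set.Ioc a b)) :=
      fun d => ((hBI.2 i d).integrable one_le_two).mono_measure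
        (Measure.restrict_mono Set.Ioc_subset_Icc_self le_rfl)
    have hBItres : ∀ d : ID n0 n1 n2,
        Integrable (fun s => s * B_I s i d) (volume.restrict (Set.Ioc a b)) :=
      fun d => (integrable_mul_L2 (continuous_memLp2 continuous_id) (hBI.2 i d)).mono_measure
        (Measure.restrict_mono Set.Ioc_subset_Icc_self le_rfl)
    have hfres : ∀ j, Integrable (fun θ => f θ j) (volume.restrict (Set.Ioc a b)) :=
      fun j => (hfj_int j).restrict
    have hftres : ∀ j, Integrable (fun θ => θ * f θ j) (volume.restrict (Set.Ioc a b)) :=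
      fun j => (hft_int j).restrict
    have hNprod : Integrable (fun p : ℝ × ℝ =>
        ∑ k, B_I p.1 i (Sum.inr k) * (Qmat n0 n1 n2 (p.1 - p.2)).mulVec (f p.2) k)
        ((volume.restrict (Set.Ioc a b)).prod (volume.restrict (Set.Ioc a b))) := by
      have h2 : ∀ k2 : Fin n2, Integrable (fun p : ℝ × ℝ =>
          B_I p.1 i (Sum.inr (Sum.inr (Sum.inl k2)))
            * ((p.1 - p.2) * f p.2 (Sum.inr (Sum.inr k2))))
          ((volume.restrict (Set.Ioc a b)).prod (volume.restrict (Set.Ioc a b))) := by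
        intro k2
        have he : (fun p : ℝ × ℝ => B_I p.1 i (Sum.inr (Sum.inr (Sum.inl k2)))
              * ((p.1 - p.2) * f p.2 (Sum.inr (Sum.inr k2))))
            = fun p : ℝ × ℝ => (p.1 * B_I p.1 i (Sum.inr (Sum.inr (Sum.inl k2))))
                * f p.2 (Sum.inr (Sum.inr k2))
              - B_I p.1 i (Sum.inr (Sum.inr (Sum.inl k2)))
                * (p.2 * f p.2 (Sum.inr (Sum.inr k2))) := by
          funext p
          ring
        rw [he]
        exact ((hBItres _).mul_prod (hfres _)).sub ((hBIres _).mul_prod (hftres _))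
      have he : (fun p : ℝ × ℝ =>
          ∑ k, B_I p.1 i (Sum.inr k) * (Qmat n0 n1 n2 (p.1 - p.2)).mulVec (f p.2) k)
          = fun p : ℝ × ℝ =>
            (∑ k1 : Fin n1, B_I p.1 i (Sum.inr (Sum.inl k1)) * f p.2 (Sum.inr (Sum.inl k1)))
            + ((∑ k2 : Fin n2, B_I p.1 i (Sum.inr (Sum.inr (Sum.inl k2)))
                * ((p.1 - p.2) * f p.2 (Sum.inr (Sum.inr k2))))
              + ∑ k2 : Fin n2, B_I p.1 i (Sum.inr (Sum.inr (Sum.inr k2)))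
                * f p.2 (Sum.inr (Sum.inr k2))) := by
        funext p
        rw [Fintype.sum_sum_type, Fintype.sum_sum_type]
        simp_rw [mulVec_Qmat_inl, mulVec_Qmat_inrl, mulVec_Qmat_inrr]
      rw [he]
      exact Integrable.add
        (integrable_finset_sum _ fun k1 _ => (hBIres _).mul_prod (hfres _))
        (Integrable.add (integrable_finset_sum _ fun k2 _ => h2 k2)
          (integrable_finset_sum _ fun k2 _ => (hBIres _).mul_prod (hfres _)))
    have hJs_form : ∀ s : ℝ, (∑ k, B_I s i (Sum.inr k) *
          ∫ θ in a..s, (Qmat n0 n1 n2 (s - θ)).mulVec (f θ) k)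
        = ∫ θ in a..s, ∑ k, B_I s i (Sum.inr k) * (Qmat n0 n1 n2 (s - θ)).mulVec (f θ) k := by
      intro s
      simp_rw [← intervalIntegral.integral_const_mul]
      rw [← intervalIntegral.integral_finset_sum
        (fun k _ => (hQv_ii s k a s).const_mul (B_I s i (Sum.inr k)))]
    have hQent_ii : ∀ θ ∈ Set.Icc a b, ∀ j : Ix n0 n1 n2, IntervalIntegrable
        (fun s => (B_I s * U2 n0 n1 n2 * Qmat n0 n1 n2 (s - θ)) i j) volume θ b := by
      intro θ hθ j
      obtain j | j | j := j
      · simp_rw [mul_Qmat_inl]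
        exact intervalIntegrable_const
      · simp_rw [mul_Qmat_inrl, mul_U2_apply]
        exact intervalIntegrable_of_memab ((hBI.2 i _).integrable one_le_two)
          hθ.1 hab' hθ.2 le_rfl
      · simp_rw [mul_Qmat_inrr, mul_U2_apply]
        have he : (fun s => (s - θ) * B_I s i (Sum.inr (Sum.inr (Sum.inl j)))
              + B_I s i (Sum.inr (Sum.inr (Sum.inr j))))
            = fun s => (s * B_I s i (Sum.inr (Sum.inr (Sum.inl j)))
              - θ * B_I s i (Sum.inr (Sum.inr (Sum.inl j))))
              + B_I s i (Sum.inr (Sum.inr (Sum.inr j))) := funext fun s => by ring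
        rw [he]
        refine IntervalIntegrable.add (IntervalIntegrable.sub ?_ ?_) ?_
        · exact intervalIntegrable_of_memab
            (integrable_mul_L2 (continuous_memLp2 continuous_id) (hBI.2 i _))
            hθ.1 hab' hθ.2 le_rfl
        · exact (intervalIntegrable_of_memab ((hBI.2 i _).integrable one_le_two)
            hθ.1 hab' hθ.2 le_rfl).const_mul θ
        · exact intervalIntegrable_of_memab ((hBI.2 i _).integrable one_le_two)
            hθ.1 hab' hθ.2 le_rfl
    have hinner : Set.EqOn
        (fun θ => ∫ s in θ..b, ∑ k, B_I s i (Sum.inr k)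
          * (Qmat n0 n1 n2 (s - θ)).mulVec (f θ) k)
        (fun θ => (Matrix.of fun l j =>
          ∫ β in θ..b, (B_I β * U2 n0 n1 n2 * Qmat n0 n1 n2 (β - θ)) l j).mulVec (f θ) i)
        (Set.uIcc a b) := by
      intro θ hθu
      have hθ : θ ∈ Set.Icc a b := by rwa [Set.uIcc_of_le hab'] at hθu
      simp only
      simp_rw [hNform]
      rw [intervalIntegral.integral_finset_sum
        (fun j _ => (hQent_ii θ hθ j).mul_const (f θ j))]
      simp_rw [intervalIntegral.integral_mul_const]
      rfl
    have eqJ : (∫ s in a..b, ∑ k, B_I s i (Sum.inr k) *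
          ∫ θ in a..s, (Qmat n0 n1 n2 (s - θ)).mulVec (f θ) k)
        = ∫ θ in a..b, (Matrix.of fun l j =>
            ∫ β in θ..b, (B_I β * U2 n0 n1 n2 * Qmat n0 n1 n2 (β - θ)) l j).mulVec (f θ) i := by
      simp_rw [hJs_form]
      rw [swap_triangle hab' _ hNprod]
      exact intervalIntegral.integral_congr hinner
    have eqBT : (B * Tstack a b n1 n2).mulVec w i
        = (BT a b n0 n1 n2 B B_I).mulVec w i + Kmat.mulVec w i := by
      rw [hBTdef, Matrix.sub_mulVec]
      simp
    linarith [eqL, eqR, eqT, eqJ, eqBT, hcore, hMint_eq, eqA]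
  · -- xfun y = Tfun xhat a.e.
    have hG0l : ∀ (v : Ix n0 n1 n2 → ℝ) (i0 : Fin n0),
        (G0 n0 n1 n2).mulVec v (.inl i0) = v (.inl i0) := by
      intro v i0
      simp [G0, Matrix.mulVec, dotProduct, Fintype.sum_sum_type, ite_mul, Finset.sum_ite_eq]
    have hG0r : ∀ (v : Ix n0 n1 n2 → ℝ) (i' : I12 n1 n2),
        (G0 n0 n1 n2).mulVec v (.inr i') = 0 := by
      intro v i'
      simp [G0, Matrix.mulVec, dotProduct, Fintype.sum_sum_type]
    have hG1l : ∀ (s' θ : ℝ) (v : Ix n0 n1 n2 → ℝ) (i0 : Fin n0),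
        (G1 a b n0 n1 n2 B B_I s' θ).mulVec v (.inl i0) = 0 := by
      intro s' θ v i0
      simp [G1, G2, Matrix.add_mulVec, Matrix.mulVec, dotProduct, Fintype.sum_sum_type]
    have hG2l : ∀ (s' θ : ℝ) (v : Ix n0 n1 n2 → ℝ) (i0 : Fin n0),
        (G2 a b n0 n1 n2 B B_I s' θ).mulVec v (.inl i0) = 0 := by
      intro s' θ v i0
      simp [G2, Matrix.mulVec, dotProduct, Fintype.sum_sum_type]
    have hG2r : ∀ (s' θ : ℝ) (v : Ix n0 n1 n2 → ℝ) (i' : I12 n1 n2),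
        (G2 a b n0 n1 n2 B B_I s' θ).mulVec v (.inr i')
          = (Tmat n1 n2 (s' - a)).mulVec
              ((BQ a b n0 n1 n2 B B_I θ).mulVec v) (emb12 n1 n2 i') := by
      intro s' θ v i'
      calc (G2 a b n0 n1 n2 B B_I s' θ).mulVec v (.inr i')
          = ((T1mat n1 n2 (s' - a) * BQ a b n0 n1 n2 B B_I θ).mulVec v) i' := rfl
        _ = ((T1mat n1 n2 (s' - a)).mulVec ((BQ a b n0 n1 n2 B B_I θ).mulVec v)) i' := by
            rw [Matrix.mulVec_mulVec]
        _ = _ := rfl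
    have hG1r : ∀ (s' θ : ℝ) (v : Ix n0 n1 n2 → ℝ) (i' : I12 n1 n2),
        (G1 a b n0 n1 n2 B B_I s' θ).mulVec v (.inr i')
          = (Qmat n0 n1 n2 (s' - θ)).mulVec v (emb12 n1 n2 i')
            + (G2 a b n0 n1 n2 B B_I s' θ).mulVec v (.inr i') := by
      intro s' θ v i'
      rw [G1, Matrix.add_mulVec]
      rfl
    have hemb1 : ∀ i1 : Fin n1, emb12 n1 n2 (Sum.inl i1) = Sum.inl i1 := fun _ => rfl
    have hemb2 : ∀ i2 : Fin n2, emb12 n1 n2 (Sum.inr i2) = Sum.inr (Sum.inl i2) := fun _ => rfl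
    have hu_int : ∀ k, Integrable
        (fun θ => (BQ a b n0 n1 n2 B B_I θ).mulVec (xhat θ) k) (μab a b) :=
      fun k => hBQf_int k xhat hxhatj_L2
    have hu_ii : ∀ (k : Ic n1 n2) {c d : ℝ}, a ≤ c → c ≤ b → a ≤ d → d ≤ b →
        IntervalIntegrable (fun θ => (BQ a b n0 n1 n2 B B_I θ).mulVec (xhat θ) k) volume c d :=
      fun k {c d} h1 h2 h3 h4 => intervalIntegrable_of_memab (hu_int k) h1 h3 h2 h4
    have hw_eq : ∀ k, (∫ θ in a..b, (BQ a b n0 n1 n2 B B_I θ).mulVec (xhat θ) k) = w k := by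
      intro k
      rw [hwdef]
      refine intervalIntegral.integral_congr fun θ hθ => ?_
      rw [Set.uIcc_of_le hab'] at hθ
      rw [← hf_eq' θ hθ]
    have hxh_ii : ∀ (j : Ix n0 n1 n2) {c d : ℝ}, a ≤ c → c ≤ b → a ≤ d → d ≤ b →
        IntervalIntegrable (fun θ => xhat θ j) volume c d :=
      fun j {c d} h1 h2 h3 h4 =>
        intervalIntegrable_of_memab ((hxhatj_L2 j).integrable one_le_two) h1 h3 h2 h4
    have hxht_ii : ∀ (j : Ix n0 n1 n2) {c d : ℝ}, a ≤ c → c ≤ b → a ≤ d → d ≤ b →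
        IntervalIntegrable (fun θ => θ * xhat θ j) volume c d :=
      fun j {c d} h1 h2 h3 h4 =>
        intervalIntegrable_of_memab
          (integrable_mul_L2 (continuous_memLp2 continuous_id) (hxhatj_L2 j)) h1 h3 h2 h4
    filter_upwards [ae_restrict_mem measurableSet_Icc] with s hs
    have hsubs : Set.Icc a s ⊆ Set.Icc a b := Set.Icc_subset_Icc le_rfl hs.2
    intro i
    obtain i0 | i1 | i2 := i
    · -- x0 block
      show f s (.inl i0) = Tfun a b n0 n1 n2 B B_I xhat s (.inl i0)
      rw [Tfun, hG0l]
      simp_rw [hG1l, hG2l]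
      rw [intervalIntegral.integral_zero, intervalIntegral.integral_zero, hf_eq s hs]
      ring
    · -- x1 block
      show x1F s i1 = Tfun a b n0 n1 n2 B B_I xhat s (.inr (.inl i1))
      have hxce := hxc s hs (.inl i1)
      rw [hxcy, Sum.elim_inl] at hxce
      rw [hxce, Tfun, hG0r]
      simp_rw [hG1r, hG2r, hemb1, mulVec_Tmat_inl, mulVec_Qmat_inl]
      rw [intervalIntegral.integral_add (hxh_ii _ le_rfl hab' hs.1 hs.2)
          (hu_ii _ le_rfl hab' hs.1 hs.2), zero_add]
      have hadj := intervalIntegral.integral_add_adjacent_intervals (μ := volume)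
        (hu_ii (Sum.inl i1) le_rfl hab' hs.1 hs.2) (hu_ii (Sum.inl i1) hs.1 hs.2 hab' le_rfl)
      have hcg : (∫ θ in a..s, f θ (.inr (.inl i1))) = ∫ θ in a..s, xhat θ (.inr (.inl i1)) := by
        refine intervalIntegral.integral_congr fun θ hθ => ?_
        rw [Set.uIcc_of_le hs.1] at hθ
        exact hf_eq θ (hsubs hθ) _
      linarith [hadj, hw_eq (Sum.inl i1), hcg]
    · -- x2 block
      show x2F s i2 = Tfun a b n0 n1 n2 B B_I xhat s (.inr (.inr i2))
      have hxce := hxc s hs (.inr (.inl i2))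
      rw [hxcy, Sum.elim_inr, Sum.elim_inl] at hxce
      rw [hxce, Tfun, hG0r]
      simp_rw [hG1r, hG2r, hemb2, mulVec_Tmat_inrl, mulVec_Qmat_inrl]
      have hQii : IntervalIntegrable (fun θ => (s - θ) * xhat θ (.inr (.inr i2))) volume a s := by
        have he : (fun θ => (s - θ) * xhat θ (.inr (.inr i2)))
            = fun θ => s * xhat θ (.inr (.inr i2)) - θ * xhat θ (.inr (.inr i2)) := by
          funext θ
          ring
        rw [he]
        exact ((hxh_ii _ le_rfl hab' hs.1 hs.2).const_mul s).sub
          (hxht_ii _ le_rfl hab' hs.1 hs.2)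
      have hTii : ∀ {c d : ℝ}, a ≤ c → c ≤ b → a ≤ d → d ≤ b → IntervalIntegrable
          (fun θ => (BQ a b n0 n1 n2 B B_I θ).mulVec (xhat θ) (Sum.inr (Sum.inl i2))
            + (s - a) * (BQ a b n0 n1 n2 B B_I θ).mulVec (xhat θ) (Sum.inr (Sum.inr i2)))
          volume c d :=
        fun {c d} h1 h2 h3 h4 => (hu_ii _ h1 h2 h3 h4).add ((hu_ii _ h1 h2 h3 h4).const_mul _)
      rw [intervalIntegral.integral_add hQii (hTii le_rfl hab' hs.1 hs.2), zero_add]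
      have hadj := intervalIntegral.integral_add_adjacent_intervals (μ := volume)
        (hTii le_rfl hab' hs.1 hs.2) (hTii hs.1 hs.2 hab' le_rfl)
      have hsplit : (∫ θ in a..b,
            ((BQ a b n0 n1 n2 B B_I θ).mulVec (xhat θ) (Sum.inr (Sum.inl i2))
            + (s - a) * (BQ a b n0 n1 n2 B B_I θ).mulVec (xhat θ) (Sum.inr (Sum.inr i2))))
          = w (Sum.inr (Sum.inl i2)) + (s - a) * w (Sum.inr (Sum.inr i2)) := by
        rw [intervalIntegral.integral_add (hu_ii _ le_rfl hab' hab' le_rfl)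
          ((hu_ii _ le_rfl hab' hab' le_rfl).const_mul _),
          intervalIntegral.integral_const_mul, hw_eq, hw_eq]
      have hcg : (∫ θ in a..s, (s - θ) * f θ (.inr (.inr i2)))
          = ∫ θ in a..s, (s - θ) * xhat θ (.inr (.inr i2)) := by
        refine intervalIntegral.integral_congr fun θ hθ => ?_
        rw [Set.uIcc_of_le hs.1] at hθ
        rw [hf_eq θ (hsubs hθ)]
      linarith [hadj, hsplit, hcg]
  · -- Dx y = xhat a.e.
    filter_upwards [ae_restrict_mem measurableSet_Icc] with s hs
    intro i
    rw [hDxy, hf_eq s hs]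


end PIEpaper
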